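/- Let $(C,D)$ be an inclusion such that every unitary of $C$ is a normalizer of $D$: $u^*du \in D$ and $udu^* \in D$ for every unitary $u \in C$ and $d \in D$. Then $(C,D)$ is a regular inclusion, and a state $\rho$ on $C$ is $D$-compatible if and only if $\rho$ is multiplicative, i.e., $\rho(xy) = \rho(x)\rho(y)$ for all $x, y \in C$. -/

import Mathlib

open scoped ComplexOrder
open Complex ComplexConjugate NormedSpace

set_option linter.unusedSectionVars false
set_option maxHeartbeats 1000000

section AuxStateLemmas

variable {C : Type*} [NormedRing C] [StarRing C] [CStarRing C] [NormedAlgebra ℂ C]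
  [CompleteSpace C] [StarModule ℂ C]

lemma aux_im (ρ : C →ₗ[ℂ] ℂ) (hpos : ∀ x : C, 0 ≤ ρ (star x * x))
    {a : C} (ha : IsSelfAdjoint a) : (ρ a).im = 0 := by
  have hp := hpos (1 + a)
  have hq := hpos (1 - a)
  rw [Complex.nonneg_iff] at hp hq
  have e : star (1 + a) * (1 + a) - star (1 - a) * (1 - a) = a + a + a + a := by
    simp only [star_add, star_sub, star_one, ha.star_eq]
    noncomm_ring
  have e2 : ρ (star (1 + a) * (1 + a)) - ρ (star (1 - a) * (1 - a))
      = ρ a + ρ a + ρ a + ρ a := by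
    rw [← map_sub, e]; simp
  have := congrArg Complex.im e2
  simp only [Complex.sub_im, Complex.add_im] at this
  linarith [hp.2, hq.2]

lemma aux_star (ρ : C →ₗ[ℂ] ℂ) (hpos : ∀ x : C, 0 ≤ ρ (star x * x)) (x : C) :
    ρ (star x) = conj (ρ x) := by
  have ha : IsSelfAdjoint (x + star x) := IsSelfAdjoint.add_star_self x
  have hb : IsSelfAdjoint (I • (x - star x)) := by
    rw [IsSelfAdjoint, star_smul, star_sub, star_star, Complex.star_def, Complex.conj_I,
      neg_smul, smul_sub, smul_sub, neg_sub]
  have h1 := aux_im ρ hpos ha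
  have h2 := aux_im ρ hpos hb
  rw [map_add] at h1
  rw [map_smul, map_sub] at h2
  simp only [Complex.add_im, smul_eq_mul, Complex.mul_im, Complex.I_re, Complex.I_im,
    Complex.sub_re, Complex.sub_im, zero_mul, one_mul, zero_add] at h1 h2
  apply Complex.ext
  · simp only [Complex.conj_re]; linarith
  · simp only [Complex.conj_im]; linarith

lemma aux_cs (ρ : C →ₗ[ℂ] ℂ) (hpos : ∀ x : C, 0 ≤ ρ (star x * x)) (x y : C) :
    ‖ρ (star x * y)‖ ^ 2 ≤ (ρ (star x * x)).re * (ρ (star y * y)).re := by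
  set B := ρ (star x * y) with hB
  set c : ℂ := if B = 0 then 1 else conj B / (‖B‖ : ℂ) with hc
  have habs : (‖B‖ : ℝ) ≥ 0 := norm_nonneg B
  have hc1 : c * B = (‖B‖ : ℂ) := by
    by_cases h : B = 0
    · simp [hc, h]
    · have hB0 : (‖B‖ : ℂ) ≠ 0 := by
        simpa using (norm_ne_zero_iff.mpr h)
      rw [hc, if_neg h, div_mul_eq_mul_div, mul_comm _ B, Complex.mul_conj,
        Complex.normSq_eq_norm_sq]
      push_cast
      rw [sq, mul_div_assoc, div_self hB0, mul_one]
  have hc2 : conj c * conj B = (‖B‖ : ℂ) := by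
    have := congrArg conj hc1
    simpa using this
  have hc3 : conj c * c = 1 := by
    by_cases h : B = 0
    · simp [hc, h]
    · have hB0 : (‖B‖ : ℂ) ≠ 0 := by
        simpa using (norm_ne_zero_iff.mpr h)
      rw [hc, if_neg h, map_div₀, Complex.conj_conj, Complex.conj_ofReal,
        div_mul_div_comm, Complex.mul_conj, Complex.normSq_eq_norm_sq]
      push_cast
      rw [sq]
      exact div_self (mul_ne_zero hB0 hB0)
  have expand : ∀ t : ℝ, ρ (star ((t : ℂ) • x + c • y) * ((t : ℂ) • x + c • y))
      = (t : ℂ) ^ 2 * ρ (star x * x) + (t : ℂ) * (c * B) + (t : ℂ) * (conj c * conj B)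
        + (conj c * c) * ρ (star y * y) := by
    intro t
    have hyx : ρ (star y * x) = conj B := by
      rw [hB, ← aux_star ρ hpos (star x * y)]
      rw [star_mul, star_star]
    simp only [star_add, star_smul, add_mul, mul_add, smul_mul_smul_comm, map_add, map_smul,
      smul_eq_mul, Complex.star_def, Complex.conj_ofReal, hyx, hB]
    ring
  have key : ∀ t : ℝ, 0 ≤ (ρ (star x * x)).re * (t * t) + (2 * ‖B‖) * t
      + (ρ (star y * y)).re := by
    intro t
    have h := hpos ((t : ℂ) • x + c • y)
    rw [expand t, Complex.nonneg_iff] at h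
    have := h.1
    rw [hc1, hc2, hc3] at this
    simp only [← Complex.ofReal_pow, Complex.add_re, Complex.mul_re, Complex.ofReal_re,
      Complex.ofReal_im, Complex.one_re, Complex.one_im] at this
    nlinarith [this]
  have hd := discrim_le_zero key
  rw [discrim] at hd
  nlinarith [hd, habs]

lemma aux_re_le (ρ : C →ₗ[ℂ] ℂ) (h1 : ρ 1 = 1) (hpos : ∀ x : C, 0 ≤ ρ (star x * x))
    (x : C) : (ρ (star x * x)).re ≤ ‖x‖ ^ 2 := by
  letI : CStarAlgebra C :=
    { ‹NormedRing C›, ‹StarRing C›, ‹CStarRing C›, ‹CompleteSpace C›,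
      ‹NormedAlgebra ℂ C›, ‹StarModule ℂ C› with }
  letI := CStarAlgebra.spectralOrder C
  haveI := CStarAlgebra.spectralOrderedRing C
  have mono : ∀ w : C, 0 ≤ w → 0 ≤ ρ w := by
    intro w hw
    rw [StarOrderedRing.nonneg_iff] at hw
    induction hw using AddSubmonoid.closure_induction with
    | mem z hz => obtain ⟨s, rfl⟩ := hz; exact hpos s
    | zero => simp
    | add a b _ _ ha hb => rw [map_add]; exact add_nonneg ha hb
  have hle : star x * x ≤ algebraMap ℝ C (‖x‖ ^ 2) :=
    CStarAlgebra.star_mul_le_algebraMap_norm_sq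
  have h2 : 0 ≤ ρ (algebraMap ℝ C (‖x‖ ^ 2) - star x * x) := mono _ (sub_nonneg.2 hle)
  rw [map_sub] at h2
  have halg : ρ (algebraMap ℝ C (‖x‖ ^ 2)) = ((‖x‖ ^ 2 : ℝ) : ℂ) := by
    rw [Algebra.algebraMap_eq_smul_one, ← Complex.coe_smul, map_smul, h1, smul_eq_mul, mul_one]
  rw [halg, Complex.nonneg_iff] at h2
  have := h2.1
  simpa [Complex.sub_re, ← Complex.ofReal_pow] using this

lemma aux_bound (ρ : C →ₗ[ℂ] ℂ) (h1 : ρ 1 = 1) (hpos : ∀ x : C, 0 ≤ ρ (star x * x))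
    (x : C) : ‖ρ x‖ ≤ ‖x‖ := by
  have hcs := aux_cs ρ hpos 1 x
  simp only [star_one, one_mul] at hcs
  rw [h1] at hcs
  simp only [Complex.one_re, one_mul] at hcs
  have hre := aux_re_le ρ h1 hpos x
  nlinarith [norm_nonneg x, norm_nonneg (ρ x)]

lemma aux_dense :
    Dense ((Submodule.span ℂ (unitary C : Set C) : Submodule ℂ C) : Set C) := by
  set S : Submodule ℂ C := Submodule.span ℂ (unitary C : Set C) with hS
  set T := S.topologicalClosure with hT
  have hmemT : ∀ {w : C}, w ∈ closure (S : Set C) → w ∈ T := by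
    intro w hw
    rw [← SetLike.mem_coe, hT, Submodule.topologicalClosure_coe]
    exact hw
  have hsa : ∀ h : C, IsSelfAdjoint h → h ∈ T := by
    intro h hh
    set a : C := I • h with ha
    have hmem : ∀ t : ℝ, NormedSpace.exp (t • a) ∈ S := by
      intro t
      apply Submodule.subset_span
      show NormedSpace.exp (t • a) ∈ (unitary C : Set C)
      let +nondep : NormedAlgebra ℚ C := .restrictScalars ℚ ℂ C
      apply exp_mem_unitary_of_mem_skewAdjoint
      rw [skewAdjoint.mem_iff, ha, star_smul, star_smul, star_trivial, Complex.star_def,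
        Complex.conj_I, hh.star_eq, neg_smul, smul_neg]
    have hd : HasDerivAt (fun t : ℝ => NormedSpace.exp (t • a)) a 0 := by
      simpa using hasDerivAt_exp_smul_const (𝕂 := ℝ) a 0
    have ha' : a ∈ T := by
      apply hmemT
      have ht := hasDerivAt_iff_tendsto_slope.mp hd
      refine mem_closure_of_tendsto ht ?_
      refine Filter.Eventually.of_forall fun t => ?_
      show slope (fun t : ℝ => NormedSpace.exp (t • a)) 0 t ∈ (S : Set C)
      rw [slope_def_module]
      refine S.smul_mem _ (S.sub_mem (hmem t) ?_)
      simpa using hmem 0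
    have h2 : (-I) • a ∈ T := T.smul_mem _ ha'
    have : (-I) • a = h := by
      rw [ha, smul_smul, neg_mul, Complex.I_mul_I, neg_neg, one_smul]
    rwa [this] at h2
  have hall : ∀ x : C, x ∈ T := by
    intro x
    have h1 : x + star x ∈ T := hsa _ (IsSelfAdjoint.add_star_self x)
    have h2 : I • (x - star x) ∈ T := by
      refine hsa _ ?_
      rw [IsSelfAdjoint, star_smul, star_sub, star_star, Complex.star_def, Complex.conj_I,
        neg_smul, smul_sub, smul_sub, neg_sub]
    have hx : x = (2⁻¹ : ℂ) • (x + star x) + (-(I / 2)) • (I • (x - star x)) := by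
      rw [smul_smul]
      have hcoef : (-(I / 2)) * I = 2⁻¹ := by
        rw [neg_mul, div_mul_eq_mul_div, Complex.I_mul_I]
        norm_num
      rw [hcoef, smul_add, smul_sub]
      module
    rw [hx]
    exact T.add_mem (T.smul_mem _ h1) (T.smul_mem _ h2)
  have : closure (S : Set C) = Set.univ := by
    apply Set.eq_univ_of_forall
    intro x
    have := hall x
    rwa [← SetLike.mem_coe, hT, Submodule.topologicalClosure_coe] at this
  rw [dense_iff_closure_eq, this]

end AuxStateLemmas

/-- `v` is a normalizer of the subset `S`:  `v* S v ⊆ S` and `v S v* ⊆ S`. -/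
def IsNormalizer {C : Type*} [Mul C] [Star C] (S : Set C) (v : C) : Prop :=
  ∀ d ∈ S, star v * d * v ∈ S ∧ v * d * star v ∈ S

/-- Let `(C,D)` be an inclusion in which every unitary of `C` normalizes `D`.  Then `(C,D)`
is a regular inclusion, and a state `ρ` on `C` is `D`-compatible if and only if `ρ` is
multiplicative. -/
theorem all_unitaries_normalize
    {C : Type*} [NormedRing C] [StarRing C] [CStarRing C] [NormedAlgebra ℂ C]
    [CompleteSpace C] [StarModule ℂ C]
    (D : StarSubalgebra ℂ C) (hDclosed : IsClosed (D : Set C))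
    (hDcomm : ∀ a ∈ D, ∀ b ∈ D, a * b = b * a)
    -- every unitary of `C` is a normalizer of `D`
    (hU : ∀ u : C, u ∈ unitary C → IsNormalizer (D : Set C) u) :
    -- `(C,D)` is regular
    Dense ((Submodule.span ℂ {v : C | IsNormalizer (D : Set C) v} : Submodule ℂ C) : Set C) ∧
    -- the `D`-compatible states are exactly the multiplicative states
    ∀ ρ : C →ₗ[ℂ] ℂ, ρ 1 = 1 → (∀ x : C, 0 ≤ ρ (star x * x)) →
      ((∀ v : C, IsNormalizer (D : Set C) v →
          (((‖ρ v‖ : ℝ) : ℂ) ^ 2 = 0 ∨ ((‖ρ v‖ : ℝ) : ℂ) ^ 2 = ρ (star v * v)))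
        ↔ ∀ x y : C, ρ (x * y) = ρ x * ρ y) := by
  have hdense := aux_dense (C := C)
  constructor
  · refine hdense.mono ?_
    exact SetLike.coe_subset_coe.mpr (Submodule.span_mono (fun u hu => hU u hu))
  · intro ρ h1 hpos
    have hstar := aux_star ρ hpos
    have hbound := aux_bound ρ h1 hpos
    constructor
    · intro hcomp x y
      haveI : Nontrivial C := by
        refine nontrivial_of_ne 1 0 fun h => ?_
        rw [h, map_zero] at h1
        exact one_ne_zero h1.symm
      have habs01 : ∀ u ∈ unitary C, ρ u = 0 ∨ ‖ρ u‖ = 1 := by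
        intro u hu
        rcases hcomp u (hU u hu) with h0 | hA
        · left
          rw [← Complex.ofReal_pow, Complex.ofReal_eq_zero] at h0
          have := pow_eq_zero_iff (n := 2) (by norm_num) |>.mp h0
          exact norm_eq_zero.mp this
        · right
          rw [(Unitary.mem_iff.mp hu).1, h1, ← Complex.ofReal_pow] at hA
          have h2 : ‖ρ u‖ ^ 2 = 1 := by exact_mod_cast hA
          nlinarith [norm_nonneg (ρ u)]
      have huni : ∀ u ∈ unitary C, ‖ρ u‖ = 1 := by
        intro u hu
        rcases habs01 u hu with hz | h1'
        · exfalso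
          have key : ∀ h : C, IsSelfAdjoint h → ρ (u * h) = 0 := by
            intro h hh
            set a : C := I • h with ha
            have hfu : ∀ t : ℝ, NormedSpace.exp (t • a) ∈ unitary C := by
              intro t
              let +nondep : NormedAlgebra ℚ C := .restrictScalars ℚ ℂ C
              apply exp_mem_unitary_of_mem_skewAdjoint
              rw [skewAdjoint.mem_iff, ha, star_smul, star_smul, star_trivial,
                Complex.star_def, Complex.conj_I, hh.star_eq, neg_smul, smul_neg]
            have hdf : HasDerivAt (fun t : ℝ => NormedSpace.exp (t • a)) a 0 := by
              simpa using hasDerivAt_exp_smul_const (𝕂 := ℝ) a 0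
            have hev : ∀ᶠ t in nhds (0 : ℝ), ρ (u * NormedSpace.exp (t • a)) = 0 := by
              have hc : Filter.Tendsto (fun t : ℝ => ‖NormedSpace.exp (t • a) - 1‖)
                  (nhds 0) (nhds 0) := by
                have h0 : NormedSpace.exp ((0 : ℝ) • a) = 1 := by simp
                have hcont := hdf.continuousAt.tendsto
                rw [h0] at hcont
                have hns := (hcont.sub (tendsto_const_nhds (x := (1 : C)))).norm
                simpa using hns
              filter_upwards [hc.eventually_lt_const zero_lt_one] with t ht
              have humem : u * NormedSpace.exp (t • a) ∈ unitary C := mul_mem hu (hfu t)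
              have hsmall : ‖ρ (u * NormedSpace.exp (t • a))‖ < 1 := by
                have e : ρ (u * NormedSpace.exp (t • a)) = ρ (u * (NormedSpace.exp (t • a) - 1)) := by
                  rw [mul_sub, map_sub, mul_one, hz, sub_zero]
                rw [e]
                calc ‖ρ (u * (NormedSpace.exp (t • a) - 1))‖
                    ≤ ‖u * (NormedSpace.exp (t • a) - 1)‖ := hbound _
                  _ = ‖NormedSpace.exp (t • a) - 1‖ := CStarRing.norm_coe_unitary_mul ⟨u, hu⟩ _
                  _ < 1 := ht
              rcases habs01 _ humem with h0' | h1'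
              · exact h0'
              · rw [h1'] at hsmall
                exact absurd hsmall (lt_irrefl 1)
            set ρ' : C →L[ℂ] ℂ := LinearMap.mkContinuous ρ 1 (fun w => by
              simpa using hbound w) with hρ'
            have hprod : HasDerivAt (fun t : ℝ => u * NormedSpace.exp (t • a)) (u * a) 0 :=
              hdf.const_mul u
            have hg : HasDerivAt (fun t : ℝ => ρ (u * NormedSpace.exp (t • a))) (ρ (u * a)) 0 := by
              have hcomp' := ((ρ'.restrictScalars ℝ).hasFDerivAt
                (x := u * NormedSpace.exp ((0 : ℝ) • a))).comp_hasDerivAt 0 hprod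
              exact hcomp'
            have hg0 : HasDerivAt (fun t : ℝ => ρ (u * NormedSpace.exp (t • a))) 0 0 :=
              (hasDerivAt_const (0 : ℝ) (0 : ℂ)).congr_of_eventuallyEq hev
            have hz2 : ρ (u * a) = 0 := hg.unique hg0
            rw [ha, mul_smul_comm, map_smul, smul_eq_mul] at hz2
            rcases mul_eq_zero.mp hz2 with h' | h'
            · exact absurd h' Complex.I_ne_zero
            · exact h'
          have huu : u * star u = 1 := (Unitary.mem_iff.mp hu).2
          have e1 := key (u + star u) (IsSelfAdjoint.add_star_self u)
          rw [mul_add, huu, map_add, h1] at e1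
          have e2 := key (I • (u - star u)) (by
            rw [IsSelfAdjoint, star_smul, star_sub, star_star, Complex.star_def,
              Complex.conj_I, neg_smul, smul_sub, smul_sub, neg_sub])
          rw [mul_smul_comm, mul_sub, huu, map_smul, map_sub, h1, smul_eq_mul] at e2
          have h2' : ρ (u * u) = 1 := by
            rcases mul_eq_zero.mp e2 with h' | h'
            · exact absurd h' Complex.I_ne_zero
            · exact sub_eq_zero.mp h'
          rw [h2'] at e1
          norm_num at e1
        · exact h1'
      have hmul1 : ∀ u ∈ unitary C, ∀ z : C, ρ (z * u) = ρ z * ρ u := by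
        intro u hu z
        have hsuu : star u * u = 1 := (Unitary.mem_iff.mp hu).1
        have hmc : conj (ρ u) * ρ u = 1 := by
          rw [mul_comm, Complex.mul_conj, Complex.normSq_eq_norm_sq, huni u hu]
          norm_num
        have hw : ρ (star (u - ρ u • 1) * (u - ρ u • 1)) = 0 := by
          have expand : ρ (star (u - ρ u • 1) * (u - ρ u • 1))
              = ρ (star u * u) - ρ u * ρ (star u) - conj (ρ u) * ρ u
                + conj (ρ u) * ρ u * ρ 1 := by
            simp only [star_sub, star_smul, sub_mul, mul_sub, smul_mul_assoc, mul_smul_comm,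
              map_sub, map_smul, smul_smul, smul_eq_mul, star_one, mul_one, one_mul,
              Complex.star_def]
            ring
          rw [expand, hsuu, h1, hstar u]
          linear_combination -hmc
        have hcs := aux_cs ρ hpos (star z) (u - ρ u • 1)
        rw [star_star, hw] at hcs
        simp only [Complex.zero_re, mul_zero] at hcs
        have h0 : ‖ρ (z * (u - ρ u • 1))‖ = 0 := by
          nlinarith [norm_nonneg (ρ (z * (u - ρ u • 1)))]
        have h0' : ρ (z * (u - ρ u • 1)) = 0 := norm_eq_zero.mp h0
        rw [mul_sub, map_sub, mul_smul_comm, map_smul, mul_one, smul_eq_mul,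
          sub_eq_zero] at h0'
        rw [h0', mul_comm]
      -- extend by density
      set ρ' : C →L[ℂ] ℂ := LinearMap.mkContinuous ρ 1 (fun w => by
        simpa using hbound w) with hρ'
      have hρcont : Continuous fun y : C => ρ y := by
        have : (fun y : C => ρ y) = fun y : C => ρ' y := by
          funext w; simp [hρ', LinearMap.mkContinuous_apply]
        rw [this]
        exact ρ'.continuous
      have heq : (fun y : C => ρ (x * y)) = fun y : C => ρ x * ρ y := by
        refine Continuous.ext_on hdense ?_ ?_ ?_
        · exact hρcont.comp (continuous_const.mul continuous_id)
        · exact continuous_const.mul hρcont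
        · intro w hw
          set f₁ : C →ₗ[ℂ] ℂ := ρ.comp (LinearMap.mulLeft ℂ x) with hf₁
          set f₂ : C →ₗ[ℂ] ℂ := ρ x • ρ with hf₂
          have hEq : Set.EqOn ⇑f₁ ⇑f₂ (unitary C : Set C) := by
            intro u hu
            simp only [hf₁, hf₂, LinearMap.comp_apply, LinearMap.mulLeft_apply,
              LinearMap.smul_apply, smul_eq_mul]
            exact hmul1 u hu x
          have := LinearMap.eqOn_span' hEq hw
          simp only [hf₁, hf₂, LinearMap.comp_apply, LinearMap.mulLeft_apply,
            LinearMap.smul_apply, smul_eq_mul] at this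
          simpa using this
      exact congrFun heq y
    · intro hmult v _
      right
      rw [hmult (star v) v, hstar v, ← Complex.ofReal_pow, Complex.sq_norm]
      exact Complex.normSq_eq_conj_mul_self
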